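/- In the simple iterative scheme x^{k+1} ∈ argmin_{‖x‖_p = 1}( r^k‖x‖_∞ − ⟨x, s^k⟩ ), r^{k+1} = F(x^{k+1}), s^{k+1} ∈ ∂I(x^{k+1}), starting from any x^0 ≠ 0 with r^0 = F(x^0) and s^0 ∈ ∂I(x^0), the sequence (r^k) is monotonically nondecreasing. -/
import Mathlib

open Finset
open scoped ENNReal

noncomputable def Ifun {n : ℕ} (w : Fin n → Fin n → ℝ) (x : Fin n → ℝ) : ℝ :=
  (1 / 2) * ∑ i, ∑ j, w i j * |x i - x j|

noncomputable def SgnSet (t : ℝ) : Set ℝ :=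
  if 0 < t then {1} else if t < 0 then {-1} else Set.Icc (-1) 1

noncomputable def subgrad {n : ℕ} (w : Fin n → Fin n → ℝ) (y : Fin n → ℝ) :
    Set (Fin n → ℝ) :=
  {s | ∃ z : Fin n → Fin n → ℝ, (∀ i j, z i j ∈ SgnSet (y i - y j)) ∧
    (∀ i j, z i j = - z j i) ∧ ∀ i, s i = ∑ j, w i j * z i j}

noncomputable def pnorm {n : ℕ} (p : ℝ≥0∞) (x : Fin n → ℝ) : ℝ :=
  if p = ⊤ then ‖x‖ else (∑ i, |x i| ^ p.toReal) ^ (1 / p.toReal)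

lemma sgn_abs_le {t z : ℝ} (h : z ∈ SgnSet t) : |z| ≤ 1 := by
  unfold SgnSet at h
  split_ifs at h with h1 h2
  · simp [Set.mem_singleton_iff.mp h]
  · simp [Set.mem_singleton_iff.mp h]
  · exact abs_le.mpr ⟨h.1, h.2⟩

lemma sgn_mul {t z : ℝ} (h : z ∈ SgnSet t) : z * t = |t| := by
  unfold SgnSet at h
  split_ifs at h with h1 h2
  · simp [Set.mem_singleton_iff.mp h, abs_of_pos h1]
  · simp [Set.mem_singleton_iff.mp h, abs_of_neg h2]
  · have : t = 0 := le_antisymm (not_lt.mp h1) (not_lt.mp h2)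
    simp [this]

lemma inner_key {n : ℕ} (w : Fin n → Fin n → ℝ) (hsym : ∀ i j, w i j = w j i)
    (z : Fin n → Fin n → ℝ) (hz : ∀ i j, z i j = - z j i) (v : Fin n → ℝ) :
    ∑ i, v i * (∑ j, w i j * z i j) =
      (1 / 2) * ∑ i, ∑ j, w i j * (z i j * (v i - v j)) := by
  have hswap : ∑ i, v i * (∑ j, w i j * z i j)
      = ∑ i, ∑ j, w i j * (z i j * v i) := by
    apply Finset.sum_congr rfl; intro i _
    rw [Finset.mul_sum]; apply Finset.sum_congr rfl; intro j _; ring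
  have hswap2 : ∑ i, ∑ j, w i j * (z i j * v i)
      = ∑ i, ∑ j, w i j * (- (z i j * v j)) := by
    rw [Finset.sum_comm]
    apply Finset.sum_congr rfl; intro i _
    apply Finset.sum_congr rfl; intro j _
    rw [hsym j i, hz j i]; ring
  have : 2 * (∑ i, v i * (∑ j, w i j * z i j))
      = ∑ i, ∑ j, w i j * (z i j * (v i - v j)) := by
    rw [two_mul]
    nth_rewrite 1 [hswap]
    nth_rewrite 1 [hswap2]
    rw [hswap, ← Finset.sum_add_distrib]
    apply Finset.sum_congr rfl; intro i _
    rw [← Finset.sum_add_distrib]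
    apply Finset.sum_congr rfl; intro j _; ring
  linarith

lemma inner_eq {n : ℕ} (w : Fin n → Fin n → ℝ) (hsym : ∀ i j, w i j = w j i)
    {y s : Fin n → ℝ} (hs : s ∈ subgrad w y) :
    ∑ i, y i * s i = Ifun w y := by
  obtain ⟨z, hz1, hz2, hz3⟩ := hs
  have : ∑ i, y i * s i = ∑ i, y i * (∑ j, w i j * z i j) := by
    apply Finset.sum_congr rfl; intro i _; rw [hz3 i]
  rw [this, inner_key w hsym z hz2 y, Ifun]
  congr 1
  apply Finset.sum_congr rfl; intro i _
  apply Finset.sum_congr rfl; intro j _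
  rw [sgn_mul (hz1 i j)]

lemma inner_le {n : ℕ} (w : Fin n → Fin n → ℝ) (hsym : ∀ i j, w i j = w j i)
    (hnn : ∀ i j, 0 ≤ w i j) {y s : Fin n → ℝ} (hs : s ∈ subgrad w y)
    (v : Fin n → ℝ) : ∑ i, v i * s i ≤ Ifun w v := by
  obtain ⟨z, hz1, hz2, hz3⟩ := hs
  have : ∑ i, v i * s i = ∑ i, v i * (∑ j, w i j * z i j) := by
    apply Finset.sum_congr rfl; intro i _; rw [hz3 i]
  rw [this, inner_key w hsym z hz2 v, Ifun]
  have h2 : (0:ℝ) < 1/2 := by norm_num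
  apply mul_le_mul_of_nonneg_left _ (le_of_lt h2)
  apply Finset.sum_le_sum; intro i _
  apply Finset.sum_le_sum; intro j _
  apply mul_le_mul_of_nonneg_left _ (hnn i j)
  calc z i j * (v i - v j) ≤ |z i j * (v i - v j)| := le_abs_self _
    _ = |z i j| * |v i - v j| := abs_mul _ _
    _ ≤ 1 * |v i - v j| := by
        exact mul_le_mul_of_nonneg_right (sgn_abs_le (hz1 i j)) (abs_nonneg _)
    _ = |v i - v j| := one_mul _

lemma pnorm_zero_eq {n : ℕ} {p : ℝ≥0∞} (hp : 1 ≤ p) : pnorm p (0 : Fin n → ℝ) = 0 := by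
  unfold pnorm
  split_ifs with h
  · simp
  · have ht : 0 < p.toReal := ENNReal.toReal_pos (by positivity) h
    simp [Real.zero_rpow (ne_of_gt ht)]
    exact Real.zero_rpow (by positivity)

lemma pnorm_smul {n : ℕ} {p : ℝ≥0∞} (hp : 1 ≤ p) {c : ℝ} (hc : 0 ≤ c)
    (x : Fin n → ℝ) : pnorm p (c • x) = c * pnorm p x := by
  unfold pnorm
  split_ifs with h
  · rw [norm_smul, Real.norm_eq_abs, abs_of_nonneg hc]
  · have ht : 0 < p.toReal := ENNReal.toReal_pos (by positivity) h
    have hsum : ∀ i, |(c • x) i| ^ p.toReal = c ^ p.toReal * |x i| ^ p.toReal := by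
      intro i
      simp only [Pi.smul_apply, smul_eq_mul, abs_mul, abs_of_nonneg hc]
      exact Real.mul_rpow hc (abs_nonneg _)
    simp only [hsum, ← Finset.mul_sum]
    rw [Real.mul_rpow (by positivity) (by positivity), ← Real.rpow_mul hc,
      mul_one_div_cancel (ne_of_gt ht), Real.rpow_one]

lemma pnorm_pos {n : ℕ} {p : ℝ≥0∞} (hp : 1 ≤ p) {x : Fin n → ℝ} (hx : x ≠ 0) :
    0 < pnorm p x := by
  unfold pnorm
  split_ifs with h
  · exact norm_pos_iff.mpr hx
  · have ht : 0 < p.toReal := ENNReal.toReal_pos (by positivity) h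
    apply Real.rpow_pos_of_pos
    obtain ⟨i, hi⟩ := Function.ne_iff.mp hx
    have : 0 < |x i| ^ p.toReal := Real.rpow_pos_of_pos (abs_pos.mpr hi) _
    calc (0:ℝ) < |x i| ^ p.toReal := this
      _ ≤ ∑ j, |x j| ^ p.toReal :=
        Finset.single_le_sum (fun j _ => Real.rpow_nonneg (abs_nonneg _) _)
          (Finset.mem_univ i)

/-- In the simple iterative scheme, the sequence `(r^k)` is monotonically nondecreasing. -/
theorem stmt16 {n : ℕ} (w : Fin n → Fin n → ℝ)
    (hsym : ∀ i j, w i j = w j i) (hnn : ∀ i j, 0 ≤ w i j)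
    (p : ℝ≥0∞) (hp : 1 ≤ p)
    (x : ℕ → Fin n → ℝ) (r : ℕ → ℝ) (s : ℕ → Fin n → ℝ)
    (hx0 : x 0 ≠ 0)
    (hr : ∀ k, r k = Ifun w (x k) / ‖x k‖)
    (hs : ∀ k, s k ∈ subgrad w (x k))
    (hmin : ∀ k, pnorm p (x (k + 1)) = 1 ∧
      ∀ y : Fin n → ℝ, pnorm p y = 1 →
        r k * ‖x (k + 1)‖ - ∑ i, x (k + 1) i * s k i ≤ r k * ‖y‖ - ∑ i, y i * s k i) :
    ∀ k, r k ≤ r (k + 1) := by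
  have hxne : ∀ k, x k ≠ 0 := by
    intro k
    cases k with
    | zero => exact hx0
    | succ m =>
      intro h
      have := (hmin m).1
      rw [h, pnorm_zero_eq hp] at this
      norm_num at this
  intro k
  have hNk : (0:ℝ) < ‖x k‖ := norm_pos_iff.mpr (hxne k)
  have hN1 : (0:ℝ) < ‖x (k+1)‖ := norm_pos_iff.mpr (hxne (k+1))
  -- r k * ‖x k‖ = Ifun w (x k) = ⟨x k, s k⟩
  have hrk : r k * ‖x k‖ = Ifun w (x k) := by
    rw [hr k, div_mul_cancel₀ _ (ne_of_gt hNk)]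
  have hinner : ∑ i, x k i * s k i = Ifun w (x k) := inner_eq w hsym (hs k)
  -- scaled vector
  set c : ℝ := (pnorm p (x k))⁻¹ with hc
  have hpk : 0 < pnorm p (x k) := pnorm_pos hp (hxne k)
  have hcpos : 0 < c := inv_pos.mpr hpk
  have hyc : pnorm p (c • x k) = 1 := by
    rw [pnorm_smul hp (le_of_lt hcpos), hc, inv_mul_cancel₀ (ne_of_gt hpk)]
  have hmin2 := (hmin k).2 (c • x k) hyc
  have hrhs : r k * ‖c • x k‖ - ∑ i, (c • x k) i * s k i = 0 := by
    have hn : ‖c • x k‖ = c * ‖x k‖ := by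
      rw [norm_smul, Real.norm_eq_abs, abs_of_pos hcpos]
    have hsum : ∑ i, (c • x k) i * s k i = c * ∑ i, x k i * s k i := by
      rw [Finset.mul_sum]
      apply Finset.sum_congr rfl; intro i _
      simp [mul_assoc]
    rw [hn, hsum, hinner, ← hrk]; ring
  rw [hrhs] at hmin2
  have hle : r k * ‖x (k+1)‖ ≤ Ifun w (x (k+1)) := by
    have := inner_le w hsym hnn (hs k) (x (k+1))
    linarith
  have hr1 : Ifun w (x (k+1)) = r (k+1) * ‖x (k+1)‖ := by
    rw [hr (k+1), div_mul_cancel₀ _ (ne_of_gt hN1)]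
  rw [hr1] at hle
  exact le_of_mul_le_mul_right hle hN1
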